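/- Let n ≥ 1, let 𝒴 = {1, ..., K} with K ≥ 1, and let (X_i, Y_i), i = n+1, ..., 2n+1, be random variables with values in 𝒳 × 𝒴 whose joint distribution is exchangeable. Fix a measurable score function s : 𝒳 × 𝒴 → ℝ, define p(X_{2n+1}, y) = (Σ_{i=n+1}^{2n} 1{s(X_i, Y_i) ≤ s(X_{2n+1}, y)} + 1)/(n+1), and suppose the scores s(X_{n+1}, Y_{n+1}), ..., s(X_{2n}, Y_{2n}), s(X_{2n+1}, Y_{2n+1}) are almost surely pairwise distinct. Then the single-step procedure rejecting H_y : Y_{2n+1} = y iff p(X_{2n+1}, y) ≤ α (Procedure 3) satisfies FWER = P(p(X_{2n+1}, Y_{2n+1}) ≤ α) ≥ α − 1/(n+1) for every α ∈ (0,1). -/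

import Mathlib

open MeasureTheory ProbabilityTheory
open scoped ENNReal

lemma rank_strictmono {n : ℕ} (w : Fin (n+1) → ℝ) {k k' : Fin (n+1)} (h : w k < w k') :
    (Finset.univ.filter (fun i => w i ≤ w k)).card <
    (Finset.univ.filter (fun i => w i ≤ w k')).card := by
  apply Finset.card_lt_card
  constructor
  · intro i hi
    simp only [Finset.mem_filter, Finset.mem_univ, true_and] at *
    exact hi.trans h.le
  · intro hsub
    have := hsub (Finset.mem_filter.mpr ⟨Finset.mem_univ k', le_refl _⟩)
    simp only [Finset.mem_filter, Finset.mem_univ, true_and] at this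
    exact absurd this (not_le.mpr h)

lemma rank_injective {n : ℕ} (w : Fin (n+1) → ℝ) (hw : Function.Injective w) :
    Function.Injective (fun k => (Finset.univ.filter (fun i => w i ≤ w k)).card) := by
  intro k k' h
  by_contra hne
  rcases lt_trichotomy (w k) (w k') with hlt | heq | hgt
  · exact absurd h (Nat.ne_of_lt (rank_strictmono w hlt))
  · exact hne (hw heq)
  · exact absurd h.symm (Nat.ne_of_lt (rank_strictmono w hgt))

lemma rank_count {n : ℕ} (w : Fin (n+1) → ℝ) (hw : Function.Injective w)
    (m : ℕ) (hm : m ≤ n + 1) :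
    m ≤ (Finset.univ.filter (fun k : Fin (n+1) =>
        (Finset.univ.filter (fun i => w i ≤ w k)).card ≤ m)).card := by
  set r := fun k : Fin (n+1) => (Finset.univ.filter (fun i => w i ≤ w k)).card with hr
  have hinj := rank_injective w hw
  have hbound : ∀ k, r k ≤ n + 1 := fun k => by
    simpa using Finset.card_filter_le Finset.univ (fun i => w i ≤ w k)
  have hgt : (Finset.univ.filter (fun k : Fin (n+1) => ¬ r k ≤ m)).card ≤ n + 1 - m := by
    have himg : (Finset.univ.filter (fun k : Fin (n+1) => ¬ r k ≤ m)).image r ⊆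
        Finset.Icc (m+1) (n+1) := by
      intro v hv
      simp only [Finset.mem_image, Finset.mem_filter, Finset.mem_univ, true_and] at hv
      obtain ⟨k, hk, rfl⟩ := hv
      exact Finset.mem_Icc.mpr ⟨Nat.succ_le_of_lt (not_le.mp hk), hbound k⟩
    calc (Finset.univ.filter (fun k : Fin (n+1) => ¬ r k ≤ m)).card
        = ((Finset.univ.filter (fun k : Fin (n+1) => ¬ r k ≤ m)).image r).card :=
          (Finset.card_image_of_injective _ hinj).symm
      _ ≤ (Finset.Icc (m+1) (n+1)).card := Finset.card_le_card himg
      _ = n + 1 - m := by rw [Nat.card_Icc]; omega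
  have hsplit := Finset.card_filter_add_card_filter_not
      (s := (Finset.univ : Finset (Fin (n+1)))) (p := fun k => r k ≤ m)
  simp only [Finset.card_univ, Fintype.card_fin] at hsplit
  have hrfl : (Finset.univ.filter (fun k : Fin (n+1) =>
      (Finset.univ.filter (fun i => w i ≤ w k)).card ≤ m)).card
      = (Finset.univ.filter (fun k => r k ≤ m)).card := rfl
  omega

lemma card_filter_perm {β : Type*} [Fintype β] [DecidableEq β] (σ : Equiv.Perm β)
    (q : β → Prop) [DecidablePred q] :
    (Finset.univ.filter (fun i => q (σ i))).card = (Finset.univ.filter q).card := by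
  apply Finset.card_bij (fun i _ => σ i)
  · intro a ha
    simp only [Finset.mem_filter, Finset.mem_univ, true_and] at ha ⊢
    exact ha
  · intro a _ b _ h
    exact σ.injective h
  · intro b hb
    simp only [Finset.mem_filter, Finset.mem_univ, true_and] at hb
    exact ⟨σ.symm b, by simp [hb], by simp⟩

/-- rank of coordinate `k` among the scores of `z` -/
noncomputable def rkF {X : Type*} {K n : ℕ} (s : X × Fin K → ℝ) (z : Fin (n+1) → X × Fin K)
    (k : Fin (n+1)) : ℕ :=
  (Finset.univ.filter (fun i => s (z i) ≤ s (z k))).card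

lemma rkF_measurable {X : Type*} [MeasurableSpace X] {K n : ℕ}
    {s : X × Fin K → ℝ} (hs : Measurable s) (k : Fin (n+1)) :
    Measurable (fun z : Fin (n+1) → X × Fin K => rkF s z k) := by
  have heq : (fun z : Fin (n+1) → X × Fin K => rkF s z k)
      = fun z => ∑ i, if s (z i) ≤ s (z k) then 1 else 0 := by
    funext z
    exact Finset.card_filter _ _
  rw [heq]
  apply Finset.measurable_sum
  intro i _
  exact Measurable.ite
    (measurableSet_le (hs.comp (measurable_pi_apply i)) (hs.comp (measurable_pi_apply k)))
    measurable_const measurable_const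

lemma rkF_perm {X : Type*} {K n : ℕ} (s : X × Fin K → ℝ) (z : Fin (n+1) → X × Fin K)
    (σ : Equiv.Perm (Fin (n+1))) (k : Fin (n+1)) :
    rkF s (fun i => z (σ i)) k = rkF s z (σ k) := by
  unfold rkF
  exact card_filter_perm σ (fun j => s (z j) ≤ s (z (σ k)))

lemma rkF_last {X : Type*} {K n : ℕ} (s : X × Fin K → ℝ) (z : Fin (n+1) → X × Fin K) :
    rkF s z (Fin.last n) =
      (Finset.univ.filter
        (fun i : Fin n => s (z i.castSucc) ≤ s (z (Fin.last n)))).card + 1 := by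
  unfold rkF
  rw [Finset.card_filter, Fin.sum_univ_castSucc, Finset.card_filter]
  simp

lemma rkF_count {X : Type*} {K n : ℕ} (s : X × Fin K → ℝ) (z : Fin (n+1) → X × Fin K)
    (hw : Function.Injective (fun i => s (z i))) (m : ℕ) (hm : m ≤ n + 1) :
    m ≤ (Finset.univ.filter (fun k : Fin (n+1) => rkF s z k ≤ m)).card :=
  rank_count (fun i => s (z i)) hw m hm

theorem procedure3_fwer_lower_bound
    {Ω : Type*} [MeasurableSpace Ω] (P : Measure Ω) [IsProbabilityMeasure P]
    {𝒳 : Type*} [MeasurableSpace 𝒳]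
    (n K : ℕ) (hn : 1 ≤ n) (hK : 1 ≤ K)
    (Z : Fin (n + 1) → Ω → 𝒳 × Fin K)
    (hmeas : ∀ i, Measurable (Z i))
    (hexch : ∀ σ : Equiv.Perm (Fin (n + 1)),
      Measure.map (fun ω i => Z (σ i) ω) P = Measure.map (fun ω i => Z i ω) P)
    (s : 𝒳 × Fin K → ℝ) (hs : Measurable s)
    (hdist : ∀ᵐ ω ∂P, Function.Injective (fun i : Fin (n + 1) => s (Z i ω)))
    (p : Ω → Fin K → ℝ)
    (hp : ∀ ω y, p ω y =
      (((Finset.univ.filter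
          (fun i : Fin n => s (Z i.castSucc ω) ≤ s ((Z (Fin.last n) ω).1, y))).card : ℝ) + 1)
        / (n + 1))
    (α : ℝ) (hα : α ∈ Set.Ioo (0 : ℝ) 1) :
    ENNReal.ofReal (α - 1 / (n + 1)) ≤ P {ω | p ω ((Z (Fin.last n) ω).2) ≤ α} := by
  classical
  obtain ⟨hα0, hα1⟩ := hα
  have hnpos : (0:ℝ) < (n:ℝ) + 1 := by positivity
  set m : ℕ := ⌊α * ((n:ℝ) + 1)⌋₊ with hm_def
  have hmle : m ≤ n + 1 := by
    have h1 : α * ((n:ℝ)+1) ≤ ((n+1:ℕ):ℝ) := by push_cast; nlinarith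
    calc m ≤ ⌊((n+1:ℕ):ℝ)⌋₊ := Nat.floor_le_floor h1
      _ = n + 1 := Nat.floor_natCast _
  have hJ : Measurable (fun ω i => Z i ω) := measurable_pi_lambda _ hmeas
  set S : Fin (n+1) → Set (Fin (n+1) → 𝒳 × Fin K) :=
    fun k => {z | rkF s z k ≤ m} with hS_def
  set B : Fin (n+1) → Set Ω := fun k => (fun ω i => Z i ω) ⁻¹' S k with hB_def
  have hSmeas : ∀ k, MeasurableSet (S k) := fun k => (rkF_measurable hs k) measurableSet_Iic
  have hBmeas : ∀ k, MeasurableSet (B k) := fun k => hJ (hSmeas k)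
  have hBmem : ∀ ω k, ω ∈ B k ↔ rkF s (fun i => Z i ω) k ≤ m := fun ω k => Iff.rfl
  -- equal probabilities by exchangeability
  have hBeq : ∀ k, P (B k) = P (B (Fin.last n)) := by
    intro k
    set σ := Equiv.swap k (Fin.last n) with hσ
    have hJσ : Measurable (fun ω i => Z (σ i) ω) :=
      measurable_pi_lambda _ (fun i => hmeas (σ i))
    have hpre : (fun ω i => Z (σ i) ω) ⁻¹' S k = B (Fin.last n) := by
      ext ω
      rw [Set.mem_preimage, hB_def, Set.mem_preimage]
      show rkF s (fun i => Z (σ i) ω) k ≤ m ↔ rkF s (fun i => Z i ω) (Fin.last n) ≤ m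
      rw [rkF_perm s (fun i => Z i ω) σ k, Equiv.swap_apply_left]
    calc P (B k) = Measure.map (fun ω i => Z i ω) P (S k) :=
          (Measure.map_apply hJ (hSmeas k)).symm
      _ = Measure.map (fun ω i => Z (σ i) ω) P (S k) := by rw [hexch σ]
      _ = P ((fun ω i => Z (σ i) ω) ⁻¹' S k) := Measure.map_apply hJσ (hSmeas k)
      _ = P (B (Fin.last n)) := by rw [hpre]
  -- a.e. at least m of the B k occur
  have hcount : ∀ᵐ ω ∂P, (m : ℝ≥0∞) ≤ ∑ k, (B k).indicator (fun _ => (1:ℝ≥0∞)) ω := by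
    filter_upwards [hdist] with ω hω
    have h1 := rkF_count s (fun i => Z i ω) hω m hmle
    have h2 : ∑ k, (B k).indicator (fun _ => (1:ℝ≥0∞)) ω
        = ((Finset.univ.filter (fun k : Fin (n+1) => ω ∈ B k)).card : ℝ≥0∞) := by
      rw [Finset.card_filter]
      push_cast
      refine Finset.sum_congr rfl fun k _ => ?_
      by_cases h : ω ∈ B k <;> simp [Set.indicator, h]
    rw [h2]
    have h3 : (Finset.univ.filter (fun k : Fin (n+1) => ω ∈ B k))
        = (Finset.univ.filter (fun k : Fin (n+1) => rkF s (fun i => Z i ω) k ≤ m)) :=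
      Finset.filter_congr fun k _ => by rw [hBmem]
    rw [h3]
    exact_mod_cast h1
  -- integrate
  have hsum : (m : ℝ≥0∞) ≤ ((n:ℝ≥0∞) + 1) * P (B (Fin.last n)) := by
    have hint : ∫⁻ ω, ∑ k, (B k).indicator (fun _ => (1:ℝ≥0∞)) ω ∂P = ∑ k, P (B k) := by
      rw [lintegral_finset_sum _ (fun k _ => (measurable_const.indicator (hBmeas k)))]
      exact Finset.sum_congr rfl fun k _ => lintegral_indicator_one (hBmeas k)
    calc (m : ℝ≥0∞) = ∫⁻ _, (m : ℝ≥0∞) ∂P := by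
          rw [lintegral_const, measure_univ, mul_one]
      _ ≤ ∫⁻ ω, ∑ k, (B k).indicator (fun _ => (1:ℝ≥0∞)) ω ∂P := lintegral_mono_ae hcount
      _ = ∑ k, P (B k) := hint
      _ = ∑ _k : Fin (n+1), P (B (Fin.last n)) := Finset.sum_congr rfl fun k _ => hBeq k
      _ = ((n:ℝ≥0∞)+1) * P (B (Fin.last n)) := by
          rw [Finset.sum_const, Finset.card_univ, Fintype.card_fin, nsmul_eq_mul]
          push_cast
          ring
  have hne0 : ((n:ℝ≥0∞) + 1) ≠ 0 := by simp
  have hnetop : ((n:ℝ≥0∞) + 1) ≠ ⊤ := by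
    simp [ENNReal.add_eq_top]
  have hPB : (m : ℝ≥0∞) / ((n:ℝ≥0∞)+1) ≤ P (B (Fin.last n)) := by
    rw [ENNReal.div_le_iff_le_mul (Or.inl hne0) (Or.inl hnetop), mul_comm]
    exact hsum
  -- identify the event
  have hset : {ω | p ω ((Z (Fin.last n) ω).2) ≤ α} = B (Fin.last n) := by
    ext ω
    rw [Set.mem_setOf_eq, hBmem, rkF_last, hp]
    simp only [Prod.mk.eta]
    set c := (Finset.univ.filter (fun i : Fin n =>
        s (Z i.castSucc ω) ≤ s (Z (Fin.last n) ω))).card with hc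
    rw [div_le_iff₀ hnpos, hm_def]
    rw [show ((c:ℝ) + 1) = ((c+1 : ℕ) : ℝ) by push_cast; ring]
    exact (Nat.le_floor_iff (by positivity)).symm
  rw [hset]
  refine le_trans ?_ hPB
  have hlt : α * ((n:ℝ)+1) < (m:ℝ) + 1 := Nat.lt_floor_add_one _
  have hreal : α - 1/((n:ℝ)+1) ≤ (m:ℝ)/((n:ℝ)+1) := by
    rw [sub_le_iff_le_add, ← add_div, le_div_iff₀ hnpos]
    linarith
  calc ENNReal.ofReal (α - 1/((n:ℝ)+1))
      ≤ ENNReal.ofReal ((m:ℝ)/((n:ℝ)+1)) := ENNReal.ofReal_le_ofReal hreal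
    _ = (m:ℝ≥0∞)/((n:ℝ≥0∞)+1) := by
        rw [ENNReal.ofReal_div_of_pos hnpos, ENNReal.ofReal_natCast]
        congr 1
        rw [show ((n:ℝ)+1) = ((n+1:ℕ):ℝ) by push_cast; ring, ENNReal.ofReal_natCast]
        push_cast
        ring
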